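/- Let a and b be coprime positive integers, let x be a natural number, and set y = ⌊x/b⌋. Then Σ_{j=0}^{y mod a} [a ∣ ((x mod b) + j·b)] = ε(x mod (ab)), where [·] is the indicator of the divisibility condition and ε(z) = 1 if z ∈ ⟨a,b⟩ = {α·a + β·b : α, β ∈ ℕ} and ε(z) = 0 otherwise. -/

import Mathlib

open Classical

/-- For coprime positive integers `a, b`, a natural number `x`, and `y = ⌊x / b⌋`:
`∑_{j=0}^{y % a} [a ∣ (x % b + j * b)] = ε(x % (a*b))`, where `ε(z) = 1` iff
`z ∈ ⟨a,b⟩ = {α·a + β·b : α, β ∈ ℕ}`. -/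
theorem indicator_sum_eq_membership (a b : ℕ) (ha : 0 < a) (hb : 0 < b)
    (hab : Nat.Coprime a b) (x : ℕ) :
    (∑ j ∈ Finset.range ((x / b) % a + 1), (if a ∣ x % b + j * b then 1 else 0)) =
      (if ∃ α β : ℕ, α * a + β * b = x % (a * b) then 1 else 0) := by
  set r := x % b with hr
  set q := (x / b) % a with hq
  have hrb : r < b := Nat.mod_lt _ hb
  have hqa : q < a := Nat.mod_lt _ ha
  -- x % (a*b) = r + q*b
  have hmod : x % (a * b) = r + q * b := by
    have h1 : x % (b * a) % b = x % b := Nat.mod_mod_of_dvd _ ⟨a, rfl⟩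
    have h2 : x / b % a = x % (b * a) / b := (Nat.mod_mul_right_div_self x b a).symm
    have h3 : x % (b * a) = b * (x % (b * a) / b) + x % (b * a) % b :=
      (Nat.div_add_mod _ _).symm
    rw [Nat.mul_comm a b]
    rw [h1, ← h2, ← hq, Nat.mul_comm b q] at h3
    omega
  rw [hmod]
  -- uniqueness of j with a ∣ r + j * b  for j, j' ≤ q
  have huniq : ∀ j j' : ℕ, j ≤ q → j' ≤ q → a ∣ r + j * b → a ∣ r + j' * b → j = j' := by
    have key : ∀ j j' : ℕ, j ≤ j' → j' ≤ q → a ∣ r + j * b → a ∣ r + j' * b → j = j' := by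
      intro j j' hle hle' hd hd'
      have hdvd : a ∣ (j' - j) * b := by
        have : (j' - j) * b = (r + j' * b) - (r + j * b) := by
          rw [Nat.sub_mul]
          have : j * b ≤ j' * b := Nat.mul_le_mul_right _ hle
          omega
        rw [this]
        exact Nat.dvd_sub hd' hd
      have hdj : a ∣ (j' - j) := hab.dvd_of_dvd_mul_right hdvd
      have : j' - j < a := by omega
      have := Nat.eq_zero_of_dvd_of_lt (h := this)
      rcases Nat.eq_zero_or_pos (j' - j) with h0 | hpos
      · omega
      · exact absurd (Nat.le_of_dvd hpos hdj) (by omega)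
    intro j j' hj hj' hd hd'
    rcases Nat.le_total j j' with h | h
    · exact key j j' h hj' hd hd'
    · exact (key j' j h hj hd' hd).symm
  by_cases hex : ∃ j, j ≤ q ∧ a ∣ r + j * b
  · obtain ⟨j₀, hj₀, hd₀⟩ := hex
    have hrhs : ∃ α β : ℕ, α * a + β * b = r + q * b := by
      refine ⟨(r + j₀ * b) / a, q - j₀, ?_⟩
      rw [Nat.div_mul_cancel hd₀, Nat.sub_mul]
      have : j₀ * b ≤ q * b := Nat.mul_le_mul_right _ hj₀
      omega
    rw [if_pos hrhs]
    rw [Finset.sum_eq_single_of_mem j₀ (Finset.mem_range.mpr (by omega))]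
    · rw [if_pos hd₀]
    · intro j hj hne
      rw [if_neg]
      intro hd
      exact hne (huniq j j₀ (by simpa using Nat.lt_succ_iff.mp (Finset.mem_range.mp hj)) hj₀ hd hd₀)
  · rw [if_neg, Finset.sum_eq_zero]
    · intro j hj
      rw [if_neg]
      intro hd
      exact hex ⟨j, Nat.lt_succ_iff.mp (Finset.mem_range.mp hj), hd⟩
    · rintro ⟨α, β, hαβ⟩
      have hβ : β ≤ q := by
        by_contra hβ
        have : (q + 1) * b ≤ β * b := Nat.mul_le_mul_right _ (by omega)
        have : (q + 1) * b = q * b + b := by ring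
        omega
      have hβb : β * b ≤ q * b := Nat.mul_le_mul_right _ hβ
      have hsub : (q - β) * b = q * b - β * b := Nat.sub_mul _ _ _
      have : a ∣ r + (q - β) * b := ⟨α, by rw [Nat.mul_comm a α]; omega⟩
      exact hex ⟨q - β, by omega, this⟩
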